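/- arXiv:1903.03403 — 2 statements merged into one kernel-verified Lean document; each statement's English description precedes it below -/
import Mathlib

section
/- Every zero μ of the monic polynomial p(z) = zⁿ + a_{n-1}z^{n-1} + … + a₁z + a₀ (n ≥ 2, complex coefficients) satisfies |μ| ≤ ((1/2)·w(C²)² + (1/4)·‖(C*C)² + (CC*)²‖)^{1/4}, where C = C(p) is the Frobenius companion matrix of p. -/
open Complex

variable {H : Type*} [NormedAddCommGroup H] [InnerProductSpace ℂ H] [CompleteSpace H]

/-- The numerical radius `w(T) = sup {|⟨Tx,x⟩| : ‖x‖ = 1}`. -/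
noncomputable def numRadius (T : H →L[ℂ] H) : ℝ :=
  sSup {r : ℝ | ∃ x : H, ‖x‖ = 1 ∧ r = ‖(inner ℂ (T x) x : ℂ)‖}

/-- The Crawford number `m(T) = inf {|⟨Tx,x⟩| : ‖x‖ = 1}`. -/
noncomputable def crawford (T : H →L[ℂ] H) : ℝ :=
  sInf {r : ℝ | ∃ x : H, ‖x‖ = 1 ∧ r = ‖(inner ℂ (T x) x : ℂ)‖}

/-- The real part `Re(T) = (T + T*)/2`. -/
noncomputable def reOp (T : H →L[ℂ] H) : H →L[ℂ] H := (2 : ℂ)⁻¹ • (T + star T)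

/-- The imaginary part `Im(T) = (T - T*)/(2i)`. -/
noncomputable def imOp (T : H →L[ℂ] H) : H →L[ℂ] H := (2 * Complex.I)⁻¹ • (T - star T)

/-- The Frobenius companion matrix of `z^n + a_{n-1} z^{n-1} + ⋯ + a_1 z + a_0`,
viewed as an operator on `ℂⁿ`: first row `(-a_{n-1}, …, -a_0)`, ones on the subdiagonal. -/
noncomputable def companionCLM (n : ℕ) (a : Fin n → ℂ) :
    EuclideanSpace ℂ (Fin n) →L[ℂ] EuclideanSpace ℂ (Fin n) :=
  Matrix.toEuclideanCLM (𝕜 := ℂ)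
    (Matrix.of fun i j =>
      if (i : ℕ) = 0 then -a j.rev else if (i : ℕ) = (j : ℕ) + 1 then 1 else 0)


open ContinuousLinearMap in
lemma aux_numRadius_le (T : H →L[ℂ] H) (x : H) (hx : ‖x‖ = 1) :
    ‖(inner ℂ (T x) x : ℂ)‖ ≤ numRadius T := by
  apply le_csSup
  · refine ⟨‖T‖, ?_⟩
    rintro r ⟨y, hy, rfl⟩
    calc ‖(inner ℂ (T y) y : ℂ)‖ ≤ ‖T y‖ * ‖y‖ := norm_inner_le_norm _ _
      _ ≤ ‖T‖ * ‖y‖ * ‖y‖ := by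
          have := T.le_opNorm y; nlinarith [norm_nonneg y, norm_nonneg (T y)]
      _ = ‖T‖ := by rw [hy]; ring
  · exact ⟨x, hx, rfl⟩

open ContinuousLinearMap in
lemma aux_key (C : H →L[ℂ] H) (x : H) (hx : ‖x‖ = 1) (μ : ℂ) (hCx : C x = μ • x) :
    ‖μ‖^4 ≤ (1/2) * numRadius (C ^ 2) ^ 2
      + (1/4) * ‖(star C * C) ^ 2 + (C * star C) ^ 2‖ := by
  set m := ‖μ‖ with hm
  have hm0 : (0:ℝ) ≤ m := norm_nonneg μ
  have hxx : (inner ℂ x x : ℂ) = 1 := by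
    rw [inner_self_eq_norm_sq_to_K, hx]; norm_num
  have hC2x : (C ^ 2) x = (μ ^ 2) • x := by
    rw [pow_two, ContinuousLinearMap.mul_apply, hCx, map_smul, hCx, smul_smul, ← pow_two]
  have hμ2 : ‖(inner ℂ ((C ^ 2) x) x : ℂ)‖ = m ^ 2 := by
    rw [hC2x, inner_smul_left, hxx, mul_one]
    simp [hm]
  have hw : m ^ 2 ≤ numRadius (C ^ 2) := hμ2 ▸ aux_numRadius_le (C ^ 2) x hx
  have hw0 : (0:ℝ) ≤ numRadius (C ^ 2) := le_trans (by positivity) hw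
  set T1 := star C * C with hT1
  set T2 := C * star C with hT2
  have hsC : star C = ContinuousLinearMap.adjoint C := star_eq_adjoint C
  have hT1sa : ContinuousLinearMap.adjoint T1 = T1 := by
    rw [← star_eq_adjoint, hT1, star_mul, star_star, hsC]
  have hT2sa : ContinuousLinearMap.adjoint T2 = T2 := by
    rw [← star_eq_adjoint, hT2, star_mul, star_star, hsC]
  have hCxn : ‖C x‖ = m := by rw [hCx, norm_smul, hx, mul_one]
  have key1 : ‖C x‖ ^ 2 = RCLike.re (inner ℂ (T1 x) x : ℂ) := by
    rw [hT1, hsC, mul_def]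
    exact apply_norm_sq_eq_inner_adjoint_left C x
  have key2 : ‖T1 x‖ ^ 2 = RCLike.re (inner ℂ ((T1 ^ 2) x) x : ℂ) := by
    have h := apply_norm_sq_eq_inner_adjoint_left T1 x
    rw [hT1sa] at h
    rw [show (T1 ^ 2 : H →L[ℂ] H) = T1.comp T1 by rw [pow_two, mul_def]]; exact h
  have key4 : ‖T2 x‖ ^ 2 = RCLike.re (inner ℂ ((T2 ^ 2) x) x : ℂ) := by
    have h := apply_norm_sq_eq_inner_adjoint_left T2 x
    rw [hT2sa] at h
    rw [show (T2 ^ 2 : H →L[ℂ] H) = T2.comp T2 by rw [pow_two, mul_def]]; exact h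
  have key3 : ‖(star C) x‖ ^ 2 = RCLike.re (inner ℂ (T2 x) x : ℂ) := by
    have h := apply_norm_sq_eq_inner_adjoint_left (ContinuousLinearMap.adjoint C) x
    rw [adjoint_adjoint] at h
    rw [hT2, hsC, mul_def]; exact h
  have h1 : m ^ 2 ≤ ‖T1 x‖ := by
    have hcs := re_inner_le_norm (𝕜 := ℂ) (T1 x) x
    rw [hx, mul_one] at hcs
    calc m ^ 2 = ‖C x‖ ^ 2 := by rw [hCxn]
      _ = RCLike.re (inner ℂ (T1 x) x : ℂ) := key1
      _ ≤ ‖T1 x‖ := hcs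
  have hμle : m ≤ ‖(star C) x‖ := by
    have hin : (inner ℂ ((star C) x) x : ℂ) = μ := by
      rw [hsC, adjoint_inner_left, hCx, inner_smul_right, hxx, mul_one]
    have hcs := norm_inner_le_norm (𝕜 := ℂ) ((star C) x) x
    rw [hin, hx, mul_one] at hcs
    exact hcs
  have h2 : m ^ 2 ≤ ‖T2 x‖ := by
    have hcs := re_inner_le_norm (𝕜 := ℂ) (T2 x) x
    rw [hx, mul_one] at hcs
    nlinarith [key3, norm_nonneg ((star C) x)]
  have hA : 2 * m ^ 4 ≤ ‖T1 ^ 2 + T2 ^ 2‖ := by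
    have hsum : RCLike.re (inner ℂ (((T1 ^ 2) + (T2 ^ 2)) x) x : ℂ)
        = ‖T1 x‖ ^ 2 + ‖T2 x‖ ^ 2 := by
      rw [ContinuousLinearMap.add_apply, inner_add_left, map_add, ← key2, ← key4]
    have hb : RCLike.re (inner ℂ (((T1 ^ 2) + (T2 ^ 2)) x) x : ℂ) ≤ ‖T1 ^ 2 + T2 ^ 2‖ := by
      have hcs := re_inner_le_norm (𝕜 := ℂ) ((T1 ^ 2 + T2 ^ 2) x) x
      rw [hx, mul_one] at hcs
      exact hcs.trans ((T1 ^ 2 + T2 ^ 2).unit_le_opNorm x hx.le)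
    rw [hsum] at hb
    nlinarith [h1, h2, pow_nonneg hm0 2]
  nlinarith [hw, hw0, hA, pow_nonneg hm0 2]

theorem stmt16 (n : ℕ) (hn : 2 ≤ n) (a : Fin n → ℂ) (μ : ℂ)
    (hμ : μ ^ n + ∑ k : Fin n, a k * μ ^ (k : ℕ) = 0) :
    ‖μ‖ ≤
      ((1/2) * numRadius (companionCLM n a ^ 2) ^ 2
        + (1/4) * ‖(star (companionCLM n a) * companionCLM n a) ^ 2
            + (companionCLM n a * star (companionCLM n a)) ^ 2‖) ^ ((1 : ℝ)/4) := by
  set f : Fin n → ℂ := fun j => μ ^ (n - 1 - (j : ℕ)) with hf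
  set M : Matrix (Fin n) (Fin n) ℂ := Matrix.of fun i j =>
      if (i : ℕ) = 0 then -a j.rev else if (i : ℕ) = (j : ℕ) + 1 then 1 else 0 with hM
  have hmv : M.mulVec f = μ • f := by
    funext i
    rcases Nat.eq_zero_or_pos (i : ℕ) with h0 | hpos
    · simp only [Matrix.mulVec, dotProduct, hM, Matrix.of_apply, h0, if_true, if_pos]
      have key : ∑ j : Fin n, -a j.rev * f j = -∑ k : Fin n, a k * μ ^ (k : ℕ) := by
        rw [← Finset.sum_neg_distrib]
        apply Fintype.sum_equiv Fin.revPerm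
        intro j
        have h3 : n - 1 - (j : ℕ) = ((j.rev : Fin n) : ℕ) := by
          have := j.isLt; simp only [Fin.val_rev]; omega
        simp only [hf, Fin.revPerm_apply, h3, neg_mul]
      rw [key]
      have h3 : ∑ k : Fin n, a k * μ ^ (k : ℕ) = -μ ^ n := by linear_combination hμ
      rw [h3, neg_neg]
      simp only [Pi.smul_apply, hf, smul_eq_mul, h0]
      rw [← pow_succ']
      congr 1; omega
    · have hsum : ∑ j : Fin n, M i j * f j = f ⟨(i : ℕ) - 1, by omega⟩ := by
        rw [Finset.sum_eq_single (⟨(i : ℕ) - 1, by omega⟩ : Fin n)]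
        · simp only [hM, Matrix.of_apply]
          rw [if_neg (by omega), if_pos (by omega), one_mul]
        · intro j _ hj
          simp only [hM, Matrix.of_apply]
          rw [if_neg (by omega), if_neg, zero_mul]
          intro hc
          apply hj; apply Fin.ext; simp only [Fin.val_mk]; omega
        · intro h; exact absurd (Finset.mem_univ _) h
      show ∑ j : Fin n, M i j * f j = _
      rw [hsum]
      simp only [Pi.smul_apply, hf, smul_eq_mul, Fin.val_mk]
      rw [← pow_succ']
      congr 1
      have := i.isLt; omega
  -- the eigenvector in EuclideanSpace
  set v : EuclideanSpace ℂ (Fin n) := (WithLp.equiv 2 (Fin n → ℂ)).symm f with hv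
  have hCv : companionCLM n a v = μ • v := by
    rw [companionCLM, hv, WithLp.equiv_symm_apply, Matrix.toEuclideanCLM_toLp, ← hM, hmv,
      WithLp.toLp_smul]
  have hvlast : v ⟨n - 1, by omega⟩ = 1 := by
    show f ⟨n - 1, by omega⟩ = 1
    simp [hf]
  have hvne : v ≠ 0 := by
    intro h
    rw [h] at hvlast
    simp at hvlast
  have hnv : ‖v‖ ≠ 0 := norm_ne_zero_iff.mpr hvne
  set c : ℂ := ((‖v‖ : ℝ) : ℂ)⁻¹ with hc
  set x : EuclideanSpace ℂ (Fin n) := c • v with hxdef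
  have hx : ‖x‖ = 1 := by
    rw [hxdef, norm_smul, hc, norm_inv, Complex.norm_real, Real.norm_eq_abs,
      _root_.abs_of_nonneg (norm_nonneg v)]
    exact inv_mul_cancel₀ hnv
  have hCx : companionCLM n a x = μ • x := by
    rw [hxdef, map_smul, hCv, smul_comm]
  have hkey := aux_key (companionCLM n a) x hx μ hCx
  have hm0 : (0:ℝ) ≤ ‖μ‖ := norm_nonneg μ
  calc ‖μ‖ = ((‖μ‖) ^ 4) ^ ((1:ℝ)/4) := by
        rw [← Real.rpow_natCast (‖μ‖) 4, ← Real.rpow_mul hm0]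
        norm_num
    _ ≤ _ := Real.rpow_le_rpow (by positivity) hkey (by norm_num)
end

section
/- Every zero μ of the monic polynomial p(z) = zⁿ + a_{n-1}z^{n-1} + … + a₁z + a₀ (n ≥ 2, complex coefficients) satisfies |μ| ≤ ((1/4)w(C²)² + (1/8)w(C²P + PC²) + (1/16)‖P‖²)^{1/4}, where C = C(p) is the Frobenius companion matrix and P = C*C + CC*. -/
open Complex

variable {H : Type*} [NormedAddCommGroup H] [InnerProductSpace ℂ H] [CompleteSpace H]

section AuxLemmas

omit [CompleteSpace H] in
lemma numRadius_bdd (T : H →L[ℂ] H) :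
    BddAbove {r : ℝ | ∃ x : H, ‖x‖ = 1 ∧ r = ‖(inner ℂ (T x) x : ℂ)‖} := by
  refine ⟨‖T‖, ?_⟩
  rintro r ⟨x, hx, rfl⟩
  calc ‖(inner ℂ (T x) x : ℂ)‖ ≤ ‖T x‖ * ‖x‖ := norm_inner_le_norm _ _
    _ ≤ ‖T‖ * ‖x‖ * ‖x‖ := by
        have := T.le_opNorm x
        nlinarith [norm_nonneg x, norm_nonneg (T x)]
    _ = ‖T‖ := by rw [hx]; ring

omit [CompleteSpace H] in
lemma le_numRadius (T : H →L[ℂ] H) {x : H} (hx : ‖x‖ = 1) :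
    ‖(inner ℂ (T x) x : ℂ)‖ ≤ numRadius T :=
  le_csSup (numRadius_bdd T) ⟨x, hx, rfl⟩

omit [CompleteSpace H] in
lemma numRadius_smul (c : ℂ) (hc : ‖c‖ = 1) (T : H →L[ℂ] H) :
    numRadius (c • T) = numRadius T := by
  unfold numRadius
  congr 1
  ext r
  constructor
  · rintro ⟨x, hx, rfl⟩
    exact ⟨x, hx, by simp [inner_smul_left, hc]⟩
  · rintro ⟨x, hx, rfl⟩
    exact ⟨x, hx, by simp [inner_smul_left, hc]⟩

private lemma re_le_norm' (z : ℂ) : z.re ≤ ‖z‖ := by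
  exact Complex.re_le_norm z

private lemma neg_re_le_norm' (z : ℂ) : -z.re ≤ ‖z‖ := by
  exact (neg_le_abs _).trans (Complex.abs_re_le_norm z)

lemma norm_le_of_selfAdjoint (T : H →L[ℂ] H) (hT : star T = T) {C : ℝ} (hC : 0 ≤ C)
    (hu : ∀ x : H, ‖x‖ = 1 → ‖(inner ℂ (T x) x : ℂ)‖ ≤ C) : ‖T‖ ≤ C := by
  have h : ∀ x : H, ‖(inner ℂ (T x) x : ℂ)‖ ≤ C * ‖x‖ ^ 2 := by
    intro x
    rcases eq_or_ne x 0 with rfl | hx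
    · simp
    · have hxn : (0:ℝ) < ‖x‖ := norm_pos_iff.2 hx
      set c : ℂ := ((‖x‖⁻¹ : ℝ) : ℂ) with hc
      have hcn : ‖c‖ = ‖x‖⁻¹ := by
        rw [hc, Complex.norm_real, Real.norm_eq_abs]; exact abs_of_nonneg (by positivity)
      have key := hu (c • x) (by rw [norm_smul, hcn]; field_simp)
      rw [map_smul, inner_smul_left, inner_smul_right, norm_mul, norm_mul,
        RCLike.norm_conj, hcn] at key
      calc ‖(inner ℂ (T x) x : ℂ)‖
          = ‖x‖ * ‖x‖ * (‖x‖⁻¹ * (‖x‖⁻¹ * ‖(inner ℂ (T x) x : ℂ)‖)) := by field_simp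
        _ ≤ ‖x‖ * ‖x‖ * C := by nlinarith
        _ = C * ‖x‖ ^ 2 := by ring
  have key : ∀ x y : H, 4 * re (inner ℂ (T x) y : ℂ) ≤ 2 * C * (‖x‖ ^ 2 + ‖y‖ ^ 2) := by
    intro x y
    have hadj : ∀ u v : H, (inner ℂ (T u) v : ℂ) = starRingEnd ℂ (inner ℂ (T v) u : ℂ) := by
      intro u v
      rw [ContinuousLinearMap.star_eq_adjoint] at hT
      conv_lhs => rw [← hT]
      rw [ContinuousLinearMap.adjoint_inner_left, ← inner_conj_symm]
    have e1 : (inner ℂ (T (x + y)) (x + y) : ℂ) - inner ℂ (T (x - y)) (x - y)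
        = 2 * (inner ℂ (T x) y + inner ℂ (T y) x) := by
      simp only [map_add, map_sub, inner_add_left, inner_add_right,
        inner_sub_left, inner_sub_right]
      ring
    have e2 : re ((inner ℂ (T x) y : ℂ) + inner ℂ (T y) x) = 2 * re (inner ℂ (T x) y : ℂ) := by
      rw [hadj y x, Complex.add_re, Complex.conj_re]
      ring
    have b1 : re (inner ℂ (T (x + y)) (x + y) : ℂ) ≤ C * ‖x + y‖ ^ 2 :=
      le_trans (re_le_norm' _) (h _)
    have b2 : - re (inner ℂ (T (x - y)) (x - y) : ℂ) ≤ C * ‖x - y‖ ^ 2 :=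
      le_trans (neg_re_le_norm' _) (h _)
    have par : ‖x + y‖ ^ 2 + ‖x - y‖ ^ 2 = 2 * (‖x‖ ^ 2 + ‖y‖ ^ 2) := by
      have := parallelogram_law_with_norm ℂ x y
      nlinarith [this]
    have e3 : re ((inner ℂ (T (x+y)) (x+y) : ℂ) - inner ℂ (T (x-y)) (x-y))
        = 4 * re (inner ℂ (T x) y : ℂ) := by
      rw [e1]; simp only [Complex.mul_re, Complex.add_re]
      rw [show ((2:ℂ)).re = 2 from rfl, show ((2:ℂ)).im = 0 from rfl]
      have := e2
      simp only [Complex.add_re] at this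
      linarith [this]
    have comb : 4 * re (inner ℂ (T x) y : ℂ) ≤ C * ‖x + y‖ ^ 2 + C * ‖x - y‖ ^ 2 := by
      rw [← e3, Complex.sub_re]
      linarith
    nlinarith [comb, par]
  refine T.opNorm_le_bound hC ?_
  intro x
  rcases eq_or_ne (T x) 0 with h0 | h0
  · simp [h0]; positivity
  · have hTx : (0:ℝ) < ‖T x‖ := norm_pos_iff.2 h0
    set y : H := ((‖x‖ / ‖T x‖ : ℝ) : ℂ) • T x with hy
    have hyn : ‖y‖ = ‖x‖ := by
      rw [hy, norm_smul, Complex.norm_real, Real.norm_eq_abs,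
        _root_.abs_of_nonneg (div_nonneg (norm_nonneg x) (norm_nonneg (T x)))]
      field_simp
    have hre : re (inner ℂ (T x) y : ℂ) = (‖x‖ / ‖T x‖) * ‖T x‖ ^ 2 := by
      rw [hy, inner_smul_right, inner_self_eq_norm_sq_to_K]
      norm_cast
      simp
      left
      rw [← Complex.ofReal_pow]
      exact Complex.ofReal_re _
    have hk := key x y
    rw [hre, hyn] at hk
    have hfin : ‖x‖ * ‖T x‖ ≤ C * ‖x‖ ^ 2 := by
      have e : (‖x‖ / ‖T x‖) * ‖T x‖ ^ 2 = ‖x‖ * ‖T x‖ := by field_simp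
      nlinarith [hk, e]
    rcases eq_or_ne x 0 with rfl | hx0
    · simp
    · have hx : (0:ℝ) < ‖x‖ := norm_pos_iff.2 hx0
      nlinarith

omit [CompleteSpace H] in
lemma inner_star_apply_self (X : H →L[ℂ] H) [CompleteSpace H] (x : H) :
    (inner ℂ ((star X) x) x : ℂ) = starRingEnd ℂ (inner ℂ (X x) x : ℂ) := by
  rw [ContinuousLinearMap.star_eq_adjoint, ContinuousLinearMap.adjoint_inner_left,
    ← inner_conj_symm]

/-- `‖X + X*‖ ≤ 2 w(X)` for self-adjoint part bound. -/
lemma norm_add_star_le (X : H →L[ℂ] H) (h0 : 0 ≤ numRadius X) :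
    ‖X + star X‖ ≤ 2 * numRadius X := by
  refine norm_le_of_selfAdjoint _ ?_ (by linarith) ?_
  · rw [star_add, star_star, add_comm]
  · intro x hx
    rw [ContinuousLinearMap.add_apply, inner_add_left, inner_star_apply_self]
    calc ‖(inner ℂ (X x) x : ℂ) + starRingEnd ℂ (inner ℂ (X x) x : ℂ)‖
        ≤ ‖(inner ℂ (X x) x : ℂ)‖ + ‖starRingEnd ℂ (inner ℂ (X x) x : ℂ)‖ := norm_add_le _ _
      _ = 2 * ‖(inner ℂ (X x) x : ℂ)‖ := by rw [RCLike.norm_conj]; ring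
      _ ≤ 2 * numRadius X := by linarith [le_numRadius X hx]

end AuxLemmas

lemma companion_eigen (n : ℕ) (hn : 2 ≤ n) (a : Fin n → ℂ) (μ : ℂ)
    (hμ : μ ^ n + ∑ k : Fin n, a k * μ ^ (k : ℕ) = 0) :
    companionCLM n a ((WithLp.equiv 2 (Fin n → ℂ)).symm (fun j => μ ^ (n - 1 - (j:ℕ))))
      = μ • (WithLp.equiv 2 (Fin n → ℂ)).symm (fun j => μ ^ (n - 1 - (j:ℕ))) := by
  rw [companionCLM, WithLp.equiv_symm_apply, Matrix.toEuclideanCLM_toLp]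
  rw [← WithLp.toLp_smul]
  congr 1
  funext i
  rw [Matrix.mulVec, dotProduct]
  simp only [Matrix.of_apply, Pi.smul_apply, smul_eq_mul]
  rcases Nat.eq_zero_or_pos (i : ℕ) with hi | hi
  · simp only [hi, if_true, if_pos]
    have : ∑ j : Fin n, (-a j.rev) * μ ^ (n - 1 - (j:ℕ)) = -∑ k : Fin n, a k * μ ^ (k:ℕ) := by
      rw [← Finset.sum_neg_distrib]
      apply Fintype.sum_bijective Fin.rev Fin.rev_bijective
      intro j
      rw [Fin.val_rev]
      ring_nf
      rw [show (n : ℕ) - 1 - (j:ℕ) = n - (1+(j:ℕ)) by omega]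
    rw [this]
    have hn1 : μ * μ ^ (n - 1 - 0) = μ ^ n := by
      rw [Nat.sub_zero, ← pow_succ']
      congr 1
      omega
    rw [hn1]
    linear_combination -hμ
  · have hi' : (i:ℕ) ≠ 0 := hi.ne'
    simp only [hi', if_false]
    have : ∀ j : Fin n, (if (i:ℕ) = (j:ℕ) + 1 then (1:ℂ) else 0) * μ ^ (n - 1 - (j:ℕ))
        = if j = ⟨(i:ℕ) - 1, by omega⟩ then μ ^ (n - (i:ℕ)) else 0 := by
      intro j
      by_cases h : (i:ℕ) = (j:ℕ) + 1
      · rw [if_pos h, if_pos, one_mul]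
        · congr 1; omega
        · apply Fin.ext; simp; omega
      · rw [if_neg h, if_neg, zero_mul]
        intro hj
        apply h
        rw [hj]
        simp
        omega
    rw [Finset.sum_congr rfl (fun j _ => this j), Finset.sum_ite_eq' Finset.univ]
    simp only [Finset.mem_univ, if_true]
    rw [← pow_succ']
    congr 1
    omega


private lemma expand1 {R : Type*} [Ring R] [StarRing R] (B P : R) (hPsa : star P = P) :
    (B + star B) * P + P * (B + star B) = (B * P + P * B) + star (B * P + P * B) := by
  rw [star_add, star_mul, star_mul, hPsa]
  noncomm_ring

private lemma expand2 {R : Type*} [Ring R] (G P : R) :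
    (G + P) * (G + P) = G * G + (G * P + P * G) + P * P := by
  noncomm_ring

set_option maxHeartbeats 1000000 in
lemma key_bound (A : H →L[ℂ] H) (x : H) (hxn : ‖x‖ = 1) (μ : ℂ) (hAx : A x = μ • x) :
    ‖μ‖ ^ 4 ≤
      (1/4) * numRadius (A ^ 2) ^ 2
        + (1/8) * numRadius (A ^ 2 * (star A * A + A * star A)
            + (star A * A + A * star A) * A ^ 2)
        + (1/16) * ‖star A * A + A * star A‖ ^ 2 := by
  set P : H →L[ℂ] H := star A * A + A * star A with hP
  set w2 := numRadius (A ^ 2) with hw2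
  set w3 := numRadius (A ^ 2 * P + P * A ^ 2) with hw3
  have hPsa : star P = P := by
    rw [hP, star_add, star_mul, star_mul, star_star, add_comm]
  -- rotation
  set c : ℂ := if μ = 0 then 1 else (starRingEnd ℂ μ) / ‖μ‖ with hc
  have habsne : μ ≠ 0 → (‖μ‖ : ℝ) ≠ 0 := fun h => norm_ne_zero_iff.2 h
  have hcn : ‖c‖ = 1 := by
    rw [hc]
    split_ifs with h
    · simp
    · rw [norm_div, RCLike.norm_conj]
      simp only [Complex.norm_real, Real.norm_eq_abs,
        _root_.abs_of_nonneg (norm_nonneg μ)]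
      exact div_self (habsne h)
  have hcμ : c * μ = (‖μ‖ : ℂ) := by
    rw [hc]
    split_ifs with h
    · simp [h]
    · rw [div_mul_eq_mul_div, mul_comm, Complex.mul_conj, ← Complex.sq_norm]
      push_cast
      rw [sq, mul_div_assoc, div_self (Complex.ofReal_ne_zero.2 (habsne h)), mul_one]
  have hccbar : c * starRingEnd ℂ c = 1 := by
    rw [Complex.mul_conj]
    rw [show Complex.normSq c = 1 by
      rw [← Complex.sq_norm, hcn]; norm_num]
    norm_num
  set R : H →L[ℂ] H := (2:ℂ)⁻¹ • (c • A + (starRingEnd ℂ c) • star A) with hR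
  set B : H →L[ℂ] H := (c * c) • (A * A) with hB
  set G := B + star B with hG
  set S := G + P with hS
  have hRsa : star R = R := by
    rw [hR, star_smul, star_add, star_smul, star_smul, star_star]
    simp only [starRingEnd_apply, star_star]
    rw [show star ((2:ℂ)⁻¹) = (2:ℂ)⁻¹ by simp, add_comm]
  have hGsa : star G = G := by rw [hG, star_add, star_star, add_comm]
  have hSsa : star S = S := by rw [hS, star_add, hGsa, hPsa]
  -- R*R = 4⁻¹ • S
  have hRR : R * R = (4:ℂ)⁻¹ • S := by
    have hstarB : star B = (starRingEnd ℂ c * starRingEnd ℂ c) • (star A * star A) := by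
      rw [hB, star_smul]
      congr 1
      · rw [starRingEnd_apply, star_mul']
      · rw [star_mul]
    rw [hR, smul_mul_smul_comm, add_mul, mul_add, mul_add,
      smul_mul_smul_comm, smul_mul_smul_comm, smul_mul_smul_comm, smul_mul_smul_comm,
      hccbar, mul_comm (starRingEnd ℂ c) c, hccbar, one_smul, one_smul]
    rw [hS, hG, hstarB, ← hB, hP]
    rw [show (2:ℂ)⁻¹ * 2⁻¹ = (4:ℂ)⁻¹ by norm_num]
    congr 1
    abel
  have hw2nn : 0 ≤ w2 := le_trans (norm_nonneg _) (le_numRadius _ hxn)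
  have hw3nn : 0 ≤ w3 := le_trans (norm_nonneg _) (le_numRadius _ hxn)
  have hxx : (inner ℂ x x : ℂ) = 1 := by
    rw [inner_self_eq_norm_sq_to_K, hxn]; norm_num
  have hRx : (inner ℂ (R x) x : ℂ) = ((‖μ‖ : ℝ) : ℂ) := by
    rw [hR]
    simp only [ContinuousLinearMap.smul_apply, ContinuousLinearMap.add_apply]
    rw [inner_smul_left, inner_add_left, inner_smul_left, inner_smul_left,
      hAx, inner_smul_left, inner_star_apply_self, hAx, inner_smul_left, hxx]
    have h1 : starRingEnd ℂ c * starRingEnd ℂ μ = (‖μ‖ : ℂ) := by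
      rw [← map_mul, hcμ, Complex.conj_ofReal]
    have h2 : starRingEnd ℂ ((2:ℂ)⁻¹) = (2:ℂ)⁻¹ := by simp [Complex.ext_iff]
    rw [h2]
    simp only [mul_one, Complex.conj_conj]
    linear_combination (2:ℂ)⁻¹ * h1 + (2:ℂ)⁻¹ * hcμ
  have habs : ‖μ‖ ≤ ‖R‖ := by
    have h1 : ‖(inner ℂ (R x) x : ℂ)‖ ≤ ‖R x‖ * ‖x‖ := norm_inner_le_norm _ _
    have h2 : ‖R x‖ ≤ ‖R‖ * ‖x‖ := R.le_opNorm x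
    rw [hRx, hxn, mul_one] at h1
    rw [hxn, mul_one] at h2
    have h3 : ‖((‖μ‖ : ℝ) : ℂ)‖ = ‖μ‖ := by
      rw [Complex.norm_real, Real.norm_eq_abs]
      exact _root_.abs_of_nonneg (norm_nonneg μ)
    rw [h3] at h1
    linarith
  have hCstar : ∀ (T : H →L[ℂ] H), star T = T → ‖T * T‖ = ‖T‖ ^ 2 := by
    intro T hT
    calc ‖T * T‖ = ‖star T * T‖ := by rw [hT]
      _ = ‖T‖ * ‖T‖ := CStarRing.norm_star_mul_self
      _ = ‖T‖ ^ 2 := (sq ‖T‖).symm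
  have hcc1 : ‖c * c‖ = 1 := by rw [norm_mul, hcn]; norm_num
  have hBnum : numRadius B = w2 := by
    rw [hB, numRadius_smul (c*c) hcc1, hw2, sq]
  have hGnorm : ‖G‖ ≤ 2 * w2 := by
    have := norm_add_star_le B (by rw [hBnum]; exact hw2nn)
    rwa [hBnum] at this
  set Hm : H →L[ℂ] H := B * P + P * B with hHm
  have hHmnum : numRadius Hm = w3 := by
    rw [hHm, hB, smul_mul_assoc, mul_smul_comm, ← smul_add,
      numRadius_smul (c*c) hcc1, hw3, pow_two]
  have hHnorm : ‖Hm + star Hm‖ ≤ 2 * w3 := by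
    have := norm_add_star_le Hm (by rw [hHmnum]; exact hw3nn)
    rwa [hHmnum] at this
  have hGP : G * P + P * G = Hm + star Hm := by
    rw [hHm, hG]
    exact expand1 B P hPsa
  have hSS : S * S = G * G + (G * P + P * G) + P * P := by
    rw [hS]
    exact expand2 G P
  have hSnorm : ‖S * S‖ ≤ (2*w2)^2 + 2*w3 + ‖P‖^2 := by
    rw [hSS]
    refine le_trans (norm_add₃_le) ?_
    have e1 : ‖G * G‖ ≤ (2*w2)^2 := by
      rw [hCstar G hGsa]
      have : (0:ℝ) ≤ ‖G‖ := norm_nonneg _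
      nlinarith [hGnorm]
    have e2 : ‖G * P + P * G‖ ≤ 2*w3 := by rw [hGP]; exact hHnorm
    have e3 : ‖P * P‖ ≤ ‖P‖^2 := le_of_eq (hCstar P hPsa)
    linarith
  have hR4 : ‖μ‖ ^ 4 ≤ (1/16) * ‖S * S‖ := by
    have h1 : ‖μ‖ ^ 4 ≤ ‖R‖ ^ 4 := pow_le_pow_left₀ (norm_nonneg μ) habs 4
    have h2 : ‖R * R‖ = (1/4) * ‖S‖ := by
      rw [hRR, norm_smul]
      norm_num
    have h3 : ‖R‖ ^ 4 = ‖R * R‖ ^ 2 := by rw [hCstar R hRsa]; ring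
    have h4 : ‖S‖ ^ 2 = ‖S * S‖ := (hCstar S hSsa).symm
    calc ‖μ‖ ^ 4 ≤ ‖R‖ ^ 4 := h1
      _ = ‖R * R‖ ^ 2 := h3
      _ = (1/16) * ‖S‖ ^ 2 := by rw [h2]; ring
      _ = (1/16) * ‖S * S‖ := by rw [h4]
  calc ‖μ‖ ^ 4 ≤ (1/16) * ‖S * S‖ := hR4
    _ ≤ (1/16) * ((2*w2)^2 + 2*w3 + ‖P‖^2) := by linarith
    _ = (1/4) * w2 ^ 2 + (1/8) * w3 + (1/16) * ‖P‖ ^ 2 := by ring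

theorem stmt17 (n : ℕ) (hn : 2 ≤ n) (a : Fin n → ℂ) (μ : ℂ)
    (hμ : μ ^ n + ∑ k : Fin n, a k * μ ^ (k : ℕ) = 0) :
    ‖μ‖ ≤
      ((1/4) * numRadius (companionCLM n a ^ 2) ^ 2
        + (1/8) * numRadius (companionCLM n a ^ 2
              * (star (companionCLM n a) * companionCLM n a
                  + companionCLM n a * star (companionCLM n a))
            + (star (companionCLM n a) * companionCLM n a
                  + companionCLM n a * star (companionCLM n a))
              * companionCLM n a ^ 2)
        + (1/16) * ‖star (companionCLM n a) * companionCLM n a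
            + companionCLM n a * star (companionCLM n a)‖ ^ 2) ^ ((1 : ℝ)/4) := by
  have hAv := companion_eigen n hn a μ hμ
  set v : EuclideanSpace ℂ (Fin n) :=
    (WithLp.equiv 2 (Fin n → ℂ)).symm (fun j => μ ^ (n - 1 - (j:ℕ))) with hv
  have hvne : v ≠ 0 := by
    intro h
    have h1 : (WithLp.equiv 2 (Fin n → ℂ)) v ⟨n - 1, by omega⟩ = 0 := by
      rw [h]; rfl
    rw [hv] at h1
    simp only [Equiv.apply_symm_apply] at h1
    rw [show n - 1 - (n-1) = 0 by omega] at h1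
    simp at h1
  have hvn : (0:ℝ) < ‖v‖ := norm_pos_iff.2 hvne
  set x : EuclideanSpace ℂ (Fin n) := ((‖v‖⁻¹ : ℝ) : ℂ) • v with hx
  have hxn : ‖x‖ = 1 := by
    rw [hx, norm_smul, Complex.norm_real, Real.norm_eq_abs,
      _root_.abs_of_nonneg (by positivity)]
    field_simp
  have hAx : companionCLM n a x = μ • x := by
    rw [hx, map_smul, hAv, smul_comm]
  have key := key_bound (companionCLM n a) x hxn μ hAx
  have hid : ((‖μ‖ ^ 4 : ℝ)) ^ ((1:ℝ)/4) = ‖μ‖ := by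
    rw [← Real.rpow_natCast (‖μ‖) 4, ← Real.rpow_mul (norm_nonneg μ)]
    norm_num
  calc ‖μ‖ = ((‖μ‖ ^ 4 : ℝ)) ^ ((1:ℝ)/4) := hid.symm
    _ ≤ _ := Real.rpow_le_rpow (by positivity) key (by norm_num)
end
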